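/- arXiv:1511.04894 — 2 statements merged into one kernel-verified Lean document; each statement's English description precedes it below -/
import Mathlib

section
/- Let (Q, μ) be a finite measure space, let (a_n)_{n∈ℕ} be a sequence in L¹(Q) that is bounded in L¹(Q), and let a₀ ∈ L¹(Q) with a₀ ≥ 0. Assume: (A1) a_n ≥ −a₀ a.e. for every n; (A2) a_n converges to a ∈ L¹(Q) in the biting sense, i.e. there exists a nonincreasing sequence of measurable sets E_k ⊆ Q with μ(E_k) → 0 such that for every k and every g ∈ L^∞(Q), ∫_{Q∖E_k} a_n g dμ → ∫_{Q∖E_k} a g dμ as n → ∞; (A3) limsup_{n→∞} ∫_Q a_n dμ ≤ ∫_Q a dμ. Then a_n converges to a weakly in L¹(Q), i.e. ∫_Q a_n g dμ → ∫_Q a g dμ for every g ∈ L^∞(Q). -/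
open MeasureTheory Filter

noncomputable section

set_option maxHeartbeats 1000000 in
/-- **Lemma 4.4, biting lemma upgrade.** Let `(Q, μ)` be a finite measure space
and `(a_n)` a sequence bounded in `L¹(Q)` with `a_n ≥ −a₀` for some `0 ≤ a₀ ∈ L¹`. If `a_n`
converges to `a` in the biting sense and `limsup_n ∫ a_n ≤ ∫ a`, then `a_n ⇀ a` weakly
in `L¹(Q)`. -/
theorem weakL1_of_biting
    {Q : Type*} [MeasurableSpace Q] (μ : Measure Q) [IsFiniteMeasure μ]
    (a : ℕ → Q → ℝ) (alim a₀ : Q → ℝ)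
    (hint : ∀ n, Integrable (a n) μ) (hlim_int : Integrable alim μ)
    (ha₀_int : Integrable a₀ μ) (ha₀_nonneg : ∀ᵐ x ∂μ, 0 ≤ a₀ x)
    (hbdd : ∃ C : ℝ, ∀ n, ∫ x, |a n x| ∂μ ≤ C)
    (hA1 : ∀ n, ∀ᵐ x ∂μ, -(a₀ x) ≤ a n x)
    (hA2 : ∃ E : ℕ → Set Q, (∀ k, MeasurableSet (E k)) ∧ Antitone E ∧
      Tendsto (fun k => μ (E k)) atTop (nhds 0) ∧
      ∀ k, ∀ g : Q → ℝ, Measurable g → (∃ Cg : ℝ, ∀ x, |g x| ≤ Cg) →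
        Tendsto (fun n => ∫ x in (E k)ᶜ, a n x * g x ∂μ) atTop
          (nhds (∫ x in (E k)ᶜ, alim x * g x ∂μ)))
    (hA3 : limsup (fun n => ∫ x, a n x ∂μ) atTop ≤ ∫ x, alim x ∂μ) :
    ∀ g : Q → ℝ, Measurable g → (∃ Cg : ℝ, ∀ x, |g x| ≤ Cg) →
      Tendsto (fun n => ∫ x, a n x * g x ∂μ) atTop (nhds (∫ x, alim x * g x ∂μ)) := by
  obtain ⟨E, hEmeas, _hEanti, hEμ, hEconv⟩ := hA2
  obtain ⟨C, hC⟩ := hbdd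
  rintro g hg ⟨Cg, hCg⟩
  set M : ℝ := max Cg 0 + 1 with hMdef
  have hM0 : 0 < M := by
    have := le_max_right Cg (0:ℝ); simp only [hMdef]; linarith
  have hgM : ∀ x, |g x| ≤ M := fun x => by
    have := le_max_left Cg (0:ℝ); have := hCg x; simp only [hMdef]; linarith
  have hgM' : ∃ C', ∀ x, ‖g x‖ ≤ C' := ⟨M, fun x => by simpa [Real.norm_eq_abs] using hgM x⟩
  have hag : ∀ n, Integrable (fun x => a n x * g x) μ := fun n => by
    simpa [mul_comm] using (hint n).bdd_mul hg.aestronglyMeasurable (ae_of_all _ hgM'.choose_spec)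
  have halg : Integrable (fun x => alim x * g x) μ := by
    simpa [mul_comm] using hlim_int.bdd_mul hg.aestronglyMeasurable (ae_of_all _ hgM'.choose_spec)
  -- absolute continuity of integrals over E k
  have hD : Tendsto (fun k => ∫ x in E k, (|alim x| + a₀ x) ∂μ) atTop (nhds 0) :=
    (hlim_int.abs.add ha₀_int).tendsto_setIntegral_nhds_zero hEμ
  rw [Metric.tendsto_atTop]
  intro ε hε
  set ε₁ : ℝ := ε / (2 * (1 + 2 * M)) with hε₁def
  have hε₁ : 0 < ε₁ := by positivity
  -- choose k with small exceptional mass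
  obtain ⟨k, hk⟩ : ∃ k, ∫ x in E k, (|alim x| + a₀ x) ∂μ < ε / (4 * M) := by
    have : ∀ᶠ k in atTop, ∫ x in E k, (|alim x| + a₀ x) ∂μ < ε / (4 * M) :=
      hD.eventually (eventually_lt_nhds (by positivity))
    exact this.exists
  set s : Set Q := E k with hsdef
  have hsm : MeasurableSet s := hEmeas k
  -- split the small integral
  have hsplitD : ∫ x in s, (|alim x| + a₀ x) ∂μ
      = (∫ x in s, |alim x| ∂μ) + ∫ x in s, a₀ x ∂μ :=
    integral_add hlim_int.abs.integrableOn ha₀_int.integrableOn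
  -- eventual bounds in n
  have hev1 : ∀ᶠ n in atTop,
      |(∫ x in sᶜ, a n x * g x ∂μ) - ∫ x in sᶜ, alim x * g x ∂μ| < ε₁ := by
    have := (hEconv k g hg ⟨Cg, hCg⟩)
    rw [Metric.tendsto_atTop] at this
    obtain ⟨N, hN⟩ := this ε₁ hε₁
    exact eventually_atTop.2 ⟨N, fun n hn => by simpa [Real.dist_eq] using hN n hn⟩
  have htend1 : Tendsto (fun n => ∫ x in sᶜ, a n x ∂μ) atTop
      (nhds (∫ x in sᶜ, alim x ∂μ)) := by
    have := hEconv k (fun _ => (1:ℝ)) measurable_const ⟨1, by simp⟩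
    simpa using this
  have hev2 : ∀ᶠ n in atTop,
      (∫ x in sᶜ, alim x ∂μ) - ε₁ < ∫ x in sᶜ, a n x ∂μ := by
    have := htend1.eventually (eventually_gt_nhds (show (∫ x in sᶜ, alim x ∂μ) - ε₁
      < ∫ x in sᶜ, alim x ∂μ by linarith))
    exact this
  have hbddu : IsBoundedUnder (· ≤ ·) atTop (fun n => ∫ x, a n x ∂μ) :=
    isBoundedUnder_of ⟨C, fun n =>
      le_trans (le_trans (le_abs_self _) (by
        simpa only [Real.norm_eq_abs] using norm_integral_le_integral_norm (μ := μ) (f := a n)))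
        (hC n)⟩
  have hev3 : ∀ᶠ n in atTop, (∫ x, a n x ∂μ) < (∫ x, alim x ∂μ) + ε₁ :=
    eventually_lt_of_limsup_lt (lt_of_le_of_lt hA3 (by linarith)) hbddu
  obtain ⟨N, hN⟩ := eventually_atTop.1 (hev1.and (hev2.and hev3))
  refine ⟨N, fun n hn => ?_⟩
  obtain ⟨h1, h2, h3⟩ := hN n hn
  -- notation
  set A := ∫ x in sᶜ, a n x * g x ∂μ
  set A' := ∫ x in sᶜ, alim x * g x ∂μ
  set B := ∫ x in s, a n x * g x ∂μ
  set B' := ∫ x in s, alim x * g x ∂μ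
  have hsplit1 : (∫ x, a n x * g x ∂μ) = B + A := (integral_add_compl hsm (hag n)).symm
  have hsplit2 : (∫ x, alim x * g x ∂μ) = B' + A' := (integral_add_compl hsm halg).symm
  have hsplit3 : (∫ x in s, a n x ∂μ) = (∫ x, a n x ∂μ) - ∫ x in sᶜ, a n x ∂μ := by
    have := integral_add_compl hsm (hint n); linarith
  -- |B| ≤ M * (∫_s a_n + 2 ∫_s a₀)
  have habs : |B| ≤ ∫ x in s, |a n x * g x| ∂μ := by
    simpa only [Real.norm_eq_abs] using
      norm_integral_le_integral_norm (μ := μ.restrict s) (f := fun x => a n x * g x)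
  have hptwise : ∀ᵐ x ∂μ.restrict s, |a n x * g x| ≤ M * (a n x + 2 * a₀ x) := by
    refine ae_restrict_of_ae ?_
    filter_upwards [hA1 n, ha₀_nonneg] with x hx1 hx2
    have h1 : |a n x| ≤ a n x + 2 * a₀ x := by
      rcases abs_cases (a n x) with ⟨h, _⟩ | ⟨h, _⟩ <;> linarith
    calc |a n x * g x| = |a n x| * |g x| := abs_mul _ _
      _ ≤ |a n x| * M := by
          exact mul_le_mul_of_nonneg_left (hgM x) (abs_nonneg _)
      _ ≤ (a n x + 2 * a₀ x) * M := mul_le_mul_of_nonneg_right h1 hM0.le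
      _ = M * (a n x + 2 * a₀ x) := mul_comm _ _
  have hBint : (∫ x in s, |a n x * g x| ∂μ) ≤ ∫ x in s, M * (a n x + 2 * a₀ x) ∂μ :=
    integral_mono_ae ((hag n).abs.integrableOn)
      ((((hint n).add (ha₀_int.const_mul 2)).const_mul M).integrableOn) hptwise
  have hBsplit : (∫ x in s, M * (a n x + 2 * a₀ x) ∂μ)
      = M * ((∫ x in s, a n x ∂μ) + 2 * ∫ x in s, a₀ x ∂μ) := by
    rw [integral_const_mul]
    congr 1
    rw [integral_add (hint n).integrableOn ((ha₀_int.const_mul 2).integrableOn),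
      integral_const_mul]
  -- |B'| ≤ M * ∫_s |alim|
  have habs' : |B'| ≤ ∫ x in s, |alim x * g x| ∂μ := by
    simpa only [Real.norm_eq_abs] using
      norm_integral_le_integral_norm (μ := μ.restrict s) (f := fun x => alim x * g x)
  have hB'int : (∫ x in s, |alim x * g x| ∂μ) ≤ ∫ x in s, M * |alim x| ∂μ := by
    refine integral_mono_ae (halg.abs.integrableOn)
      ((hlim_int.abs.const_mul M).integrableOn) (Filter.Eventually.of_forall fun x => ?_)
    calc |alim x * g x| = |alim x| * |g x| := abs_mul _ _
      _ ≤ |alim x| * M := mul_le_mul_of_nonneg_left (hgM x) (abs_nonneg _)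
      _ = M * |alim x| := mul_comm _ _
  have hB'split : (∫ x in s, M * |alim x| ∂μ) = M * ∫ x in s, |alim x| ∂μ :=
    integral_const_mul _ _
  -- ∫_s alim ≤ ∫_s |alim|
  have hlimabs : (∫ x in s, alim x ∂μ) ≤ ∫ x in s, |alim x| ∂μ :=
    integral_mono_ae hlim_int.integrableOn hlim_int.abs.integrableOn
      (Filter.Eventually.of_forall fun x => le_abs_self _)
  have hsplit4 : (∫ x in s, alim x ∂μ) = (∫ x, alim x ∂μ) - ∫ x in sᶜ, alim x ∂μ := by
    have := integral_add_compl hsm hlim_int; linarith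
  -- ∫_s a_n < ∫_s |alim| + 2 ε₁
  have hkey : (∫ x in s, a n x ∂μ) < (∫ x in s, |alim x| ∂μ) + 2 * ε₁ := by
    rw [hsplit3]; rw [hsplit4] at hlimabs; linarith
  -- nonnegativity facts
  have hIa₀ : 0 ≤ ∫ x in s, a₀ x ∂μ :=
    integral_nonneg_of_ae (ae_restrict_of_ae ha₀_nonneg)
  have hIabs : 0 ≤ ∫ x in s, |alim x| ∂μ :=
    integral_nonneg fun x => abs_nonneg _
  -- assemble
  have hBbound : |B| < M * ((∫ x in s, |alim x| ∂μ) + 2 * ε₁ + 2 * ∫ x in s, a₀ x ∂μ) := by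
    have := habs.trans (hBint.trans_eq hBsplit)
    have h' : M * ((∫ x in s, a n x ∂μ) + 2 * ∫ x in s, a₀ x ∂μ)
        < M * ((∫ x in s, |alim x| ∂μ) + 2 * ε₁ + 2 * ∫ x in s, a₀ x ∂μ) := by
      apply mul_lt_mul_of_pos_left _ hM0
      linarith
    linarith
  have hB'bound : |B'| ≤ M * ∫ x in s, |alim x| ∂μ := habs'.trans (hB'int.trans_eq hB'split)
  have hDk : (∫ x in s, |alim x| ∂μ) + (∫ x in s, a₀ x ∂μ) < ε / (4 * M) := by
    rw [← hsplitD]; exact hk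
  rw [Real.dist_eq, hsplit1, hsplit2]
  have hfinal : |B + A - (B' + A')| ≤ |A - A'| + |B| + |B'| := by
    have : B + A - (B' + A') = (A - A') + B + (-B') := by ring
    rw [this]
    calc |(A - A') + B + (-B')| ≤ |(A - A') + B| + |(-B')| := abs_add_le _ _
      _ ≤ |A - A'| + |B| + |(-B')| := by gcongr; exact abs_add_le _ _
      _ = |A - A'| + |B| + |B'| := by rw [abs_neg]
  have hMε : 2 * M * ((∫ x in s, |alim x| ∂μ) + (∫ x in s, a₀ x ∂μ)) < ε / 2 := by
    have := mul_lt_mul_of_pos_left hDk (show (0:ℝ) < 2 * M by linarith)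
    have h4 : 2 * M * (ε / (4 * M)) = ε / 2 := by field_simp; ring
    linarith
  have hε₁eq : ε₁ * (1 + 2 * M) = ε / 2 := by
    rw [hε₁def]; field_simp
  nlinarith [h1, hBbound, hB'bound, hMε, hfinal, hM0, hε₁]
end
end

section
/- Let (X, 𝒜, μ) be a finite measure space, let α ∈ (0,1) and η ≥ α. Let ϱ : X → ℝ be measurable with 0 < ϱ_* ≤ ϱ(x) ≤ ϱ^* < ∞ a.e. for constants ϱ_*, ϱ^*. Let θ : X → ℝ be measurable with θ ≥ θ_* > 0 a.e. and θ ∈ L^{1+η}(μ), and let w : X → [0,∞) be measurable with w ∈ L^{(1+η)/α}(μ). Assume that for every measurable h : X → [0,∞) with h ∈ L^{1+η}(μ), ∫_X ϱ (w − h^α)(θ − h) dμ ≥ 0. Then w = θ^α a.e. on X. -/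
open MeasureTheory Filter Topology
open scoped ENNReal

noncomputable section

private lemma rpow_le_one_add_self {y a : ℝ} (hy : 0 ≤ y) (ha : 0 ≤ a) (ha1 : a ≤ 1) :
    y ^ a ≤ 1 + y := by
  rcases le_or_gt y 1 with h | h
  · have := Real.rpow_le_one hy h ha
    linarith
  · have h2 := Real.rpow_le_rpow_of_exponent_le h.le ha1
    rw [Real.rpow_one] at h2
    linarith

/-- **Minty trick for powers of the temperature.** On a finite measure space,
if `0 < ϱ_* ≤ ϱ ≤ ϱ^*` a.e., `θ ≥ θ_* > 0` a.e. with `θ ∈ L^{1+η}`, `w ≥ 0` with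
`w ∈ L^{(1+η)/α}`, and `∫ ϱ (w − h^α)(θ − h) dμ ≥ 0` for every nonnegative
`h ∈ L^{1+η}`, then `w = θ^α` a.e. -/
theorem temperature_power_identification
    {X : Type*} [MeasurableSpace X] (μ : Measure X) [IsFiniteMeasure μ]
    (α η : ℝ) (hα : α ∈ Set.Ioo (0 : ℝ) 1) (hη : α ≤ η)
    (ϱ : X → ℝ) (hϱmeas : Measurable ϱ)
    (ϱstar ϱsup : ℝ) (hϱstar : 0 < ϱstar)
    (hϱbd : ∀ᵐ x ∂μ, ϱstar ≤ ϱ x ∧ ϱ x ≤ ϱsup)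
    (θ : X → ℝ) (hθmeas : Measurable θ)
    (θstar : ℝ) (hθstar : 0 < θstar) (hθlb : ∀ᵐ x ∂μ, θstar ≤ θ x)
    (hθLp : MemLp θ (ENNReal.ofReal (1 + η)) μ)
    (w : X → ℝ) (hwmeas : Measurable w) (hwnn : ∀ x, 0 ≤ w x)
    (hwLp : MemLp w (ENNReal.ofReal ((1 + η) / α)) μ)
    (hmin : ∀ h : X → ℝ, Measurable h → (∀ x, 0 ≤ h x) →
      MemLp h (ENNReal.ofReal (1 + η)) μ →
      0 ≤ ∫ x, ϱ x * ((w x - h x ^ α) * (θ x - h x)) ∂μ) :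
    ∀ᵐ x ∂μ, w x = θ x ^ α := by
  obtain ⟨hα0, hα1⟩ := hα
  have h1η : (1 : ℝ) ≤ 1 + η := by nlinarith
  have hple : (1 : ℝ≥0∞) ≤ ENNReal.ofReal (1 + η) := by
    rw [ENNReal.one_le_ofReal]; exact h1η
  have hθint : Integrable θ μ :=
    memLp_one_iff_integrable.mp (hθLp.mono_exponent hple)
  have hwple : (1 : ℝ≥0∞) ≤ ENNReal.ofReal ((1 + η) / α) := by
    rw [ENNReal.one_le_ofReal, le_div_iff₀ hα0]; nlinarith
  have hwint : Integrable w μ :=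
    memLp_one_iff_integrable.mp (hwLp.mono_exponent hwple)
  have hrpow : ∀ f : X → ℝ, Measurable f → Measurable (fun x => f x ^ α) := fun f hf =>
    (Real.continuous_rpow_const hα0.le).measurable.comp hf
  -- the function to be identified and the perturbed family
  set f : ℝ → X → ℝ := fun t x => ϱ x * (w x - (θ x + t) ^ α) with hf_def
  have hfmeas : ∀ t, Measurable (f t) := fun t =>
    hϱmeas.mul (hwmeas.sub (hrpow _ (hθmeas.add measurable_const)))
  -- dominating bound
  set B : X → ℝ := fun x => ϱsup * (w x + ((1 + θstar) + θ x)) with hB_def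
  have hBint : Integrable B μ :=
    (hwint.add ((integrable_const (1 + θstar)).add hθint)).const_mul ϱsup
  have hBbd : ∀ t : ℝ, |t| ≤ θstar → ∀ (A : Set X),
      ∀ᵐ x ∂μ, ‖A.indicator (f t) x‖ ≤ B x := by
    intro t ht A
    filter_upwards [hθlb, hϱbd] with x hθx hϱx
    obtain ⟨hϱ1, hϱ2⟩ := hϱx
    have habs := abs_le.mp ht
    have hθt : 0 ≤ θ x + t := by linarith
    have hpow_nn : 0 ≤ (θ x + t) ^ α := Real.rpow_nonneg hθt α
    have hpow_le : (θ x + t) ^ α ≤ 1 + (θ x + t) :=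
      rpow_le_one_add_self hθt hα0.le hα1.le
    have hBnn : 0 ≤ B x := by
      have := hwnn x
      have : (0:ℝ) ≤ w x + ((1 + θstar) + θ x) := by nlinarith
      have hϱsup : 0 ≤ ϱsup := by linarith
      exact mul_nonneg hϱsup this
    by_cases hxA : x ∈ A
    · rw [Set.indicator_of_mem hxA]
      have h1 : |f t x| = ϱ x * |w x - (θ x + t) ^ α| := by
        rw [hf_def, abs_mul, abs_of_nonneg (by linarith : (0:ℝ) ≤ ϱ x)]
      have h2 : |w x - (θ x + t) ^ α| ≤ w x + ((1 + θstar) + θ x) := by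
        have := hwnn x
        rw [abs_le]
        constructor <;> nlinarith
      rw [Real.norm_eq_abs, h1]
      exact mul_le_mul hϱ2 h2 (abs_nonneg _) (by linarith)
    · rw [Set.indicator_of_notMem hxA, norm_zero]
      exact hBnn
  have hindint : ∀ t : ℝ, |t| ≤ θstar → ∀ (A : Set X), MeasurableSet A →
      Integrable (A.indicator (f t)) μ := fun t ht A hA =>
    Integrable.mono' hBint ((hfmeas t).indicator hA).aestronglyMeasurable (hBbd t ht A)
  -- the key variational inequality after testing with perturbations of θ
  have claim : ∀ (A : Set X), MeasurableSet A → ∀ s : ℝ, |s| < θstar →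
      0 ≤ -s * ∫ x, A.indicator (f s) x ∂μ := by
    intro A hA s hs
    set χ : X → ℝ := A.indicator (fun _ => (1:ℝ)) with hχ_def
    have hχmeas : Measurable χ := measurable_const.indicator hA
    have hχ01 : ∀ x, χ x = 0 ∨ χ x = 1 := fun x => by
      by_cases hx : x ∈ A <;> simp [hχ_def, hx]
    set h : X → ℝ := fun x => max (θ x + s * χ x) 0 with hh_def
    have hhmeas : Measurable h := (hθmeas.add (measurable_const.mul hχmeas)).max measurable_const
    have hhnn : ∀ x, 0 ≤ h x := fun x => le_max_right _ _
    have hhLp : MemLp h (ENNReal.ofReal (1 + η)) μ := by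
      apply MemLp.of_le (hθLp.norm.add (memLp_const |s|)) hhmeas.aestronglyMeasurable
      filter_upwards with x
      have hb : h x ≤ |θ x| + |s| := by
        rcases hχ01 x with hx | hx <;>
          · rw [hh_def]
            simp only [hx, mul_zero, mul_one, add_zero]
            refine max_le ?_ (by positivity)
            have := le_abs_self (θ x); have := neg_abs_le s; have := le_abs_self s
            nlinarith
      simp only [Real.norm_eq_abs, Pi.add_apply, abs_abs]
      rw [abs_of_nonneg (hhnn x), abs_of_nonneg (by positivity : (0:ℝ) ≤ |θ x| + |s|)]
      exact hb
    have hkey := hmin h hhmeas hhnn hhLp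
    have hcong : (fun x => ϱ x * ((w x - h x ^ α) * (θ x - h x)))
        =ᵐ[μ] fun x => -s * A.indicator (f s) x := by
      filter_upwards [hθlb] with x hθx
      rcases hχ01 x with hx | hx
      · have hxA : x ∉ A := by
          intro hmem; rw [hχ_def, Set.indicator_of_mem hmem] at hx; norm_num at hx
        have hhx : h x = θ x := by
          rw [hh_def]; simp only [hx, mul_zero, add_zero]
          exact max_eq_left (by linarith)
        rw [hhx, Set.indicator_of_notMem hxA]
        ring
      · have hxA : x ∈ A := by
          by_contra hmem; rw [hχ_def, Set.indicator_of_notMem hmem] at hx; norm_num at hx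
        have habs := abs_lt.mp hs
        have hhx : h x = θ x + s := by
          rw [hh_def]; simp only [hx, mul_one]
          exact max_eq_left (by linarith)
        rw [hhx, Set.indicator_of_mem hxA, hf_def]
        ring
    rw [integral_congr_ae hcong, integral_const_mul] at hkey
    exact hkey
  -- limiting sequence
  set t : ℕ → ℝ := fun n => θstar / 2 * (1 / (n + 1)) with ht_def
  have htpos : ∀ n, 0 < t n := fun n => by
    apply mul_pos (by linarith) (by positivity)
  have htlt : ∀ n, t n < θstar := fun n => by
    have h1 : (1:ℝ) / (n + 1) ≤ 1 := by
      rw [div_le_one (by positivity)]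
      have : (0:ℝ) ≤ (n:ℝ) := Nat.cast_nonneg n
      linarith
    have : t n ≤ θstar / 2 * 1 := by
      apply mul_le_mul_of_nonneg_left h1 (by linarith)
    linarith
  have ht0 : Tendsto t atTop (𝓝 0) := by
    have := tendsto_one_div_add_atTop_nhds_zero_nat.const_mul (θstar / 2)
    simpa [ht_def] using this
  -- limit identification via dominated convergence
  have hlim : ∀ (A : Set X), MeasurableSet A → ∀ (s : ℕ → ℝ),
      Tendsto s atTop (𝓝 0) → (∀ n, |s n| ≤ θstar) →
      Tendsto (fun n => ∫ x, A.indicator (f (s n)) x ∂μ) atTop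
        (𝓝 (∫ x, A.indicator (f 0) x ∂μ)) := by
    intro A hA s hs hsbd
    apply tendsto_integral_of_dominated_convergence B
      (fun n => ((hfmeas (s n)).indicator hA).aestronglyMeasurable) hBint
      (fun n => hBbd (s n) (hsbd n) A)
    filter_upwards with x
    by_cases hxA : x ∈ A
    · simp only [Set.indicator_of_mem hxA, hf_def]
      have h1 : Tendsto (fun n => θ x + s n) atTop (𝓝 (θ x + 0)) :=
        tendsto_const_nhds.add hs
      have h2 : Tendsto (fun n => (θ x + s n) ^ α) atTop (𝓝 ((θ x + 0) ^ α)) :=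
        h1.rpow_const (Or.inr hα0.le)
      exact (tendsto_const_nhds.sub h2).const_mul (ϱ x)
    · simp only [Set.indicator_of_notMem hxA]
      exact tendsto_const_nhds
  -- for each measurable set, the limit integral is zero
  have hzero : ∀ (A : Set X), MeasurableSet A → ∫ x, A.indicator (f 0) x ∂μ = 0 := by
    intro A hA
    have hle : ∫ x, A.indicator (f 0) x ∂μ ≤ 0 := by
      refine le_of_tendsto' (hlim A hA t ht0 (fun n => by
        rw [abs_of_pos (htpos n)]; exact (htlt n).le)) (fun n => ?_)
      have hc := claim A hA (t n) (by rw [abs_of_pos (htpos n)]; exact htlt n)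
      nlinarith [htpos n]
    have hge : 0 ≤ ∫ x, A.indicator (f 0) x ∂μ := by
      have hs0 : Tendsto (fun n => -(t n)) atTop (𝓝 0) := by
        simpa using ht0.neg
      refine ge_of_tendsto' (hlim A hA (fun n => -(t n)) hs0 (fun n => by
        rw [abs_neg, abs_of_pos (htpos n)]; exact (htlt n).le)) (fun n => ?_)
      have hc := claim A hA (-(t n)) (by rw [abs_neg, abs_of_pos (htpos n)]; exact htlt n)
      nlinarith [htpos n]
    linarith
  -- conclude w ≤ θ^α a.e.
  have hf0 : ∀ x, f 0 x = ϱ x * (w x - θ x ^ α) := fun x => by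
    rw [hf_def]; simp
  have hup : ∀ᵐ x ∂μ, w x ≤ θ x ^ α := by
    set A : Set X := {x | θ x ^ α < w x} with hA_def
    have hA : MeasurableSet A := measurableSet_lt (hrpow θ hθmeas) hwmeas
    have hnn : 0 ≤ᵐ[μ] A.indicator (f 0) := by
      filter_upwards [hϱbd] with x hϱx
      simp only [Pi.zero_apply]
      by_cases hxA : x ∈ A
      · rw [Set.indicator_of_mem hxA, hf0]
        have hxA' : θ x ^ α < w x := hxA
        nlinarith [hϱx.1]
      · rw [Set.indicator_of_notMem hxA]
    have heq := (integral_eq_zero_iff_of_nonneg_ae hnn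
      (hindint 0 (by rw [abs_zero]; exact hθstar.le) A hA)).mp (hzero A hA)
    filter_upwards [heq, hϱbd] with x hx hϱx
    by_contra hcon
    push_neg at hcon
    have hxA : x ∈ A := hcon
    simp only [Pi.zero_apply] at hx
    rw [Set.indicator_of_mem hxA, hf0] at hx
    have hxA' : θ x ^ α < w x := hcon
    nlinarith [hϱx.1]
  -- conclude θ^α ≤ w a.e.
  have hdown : ∀ᵐ x ∂μ, θ x ^ α ≤ w x := by
    set A : Set X := {x | w x < θ x ^ α} with hA_def
    have hA : MeasurableSet A := measurableSet_lt hwmeas (hrpow θ hθmeas)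
    have hnn : 0 ≤ᵐ[μ] fun x => -(A.indicator (f 0) x) := by
      filter_upwards [hϱbd] with x hϱx
      simp only [Pi.zero_apply]
      by_cases hxA : x ∈ A
      · rw [Set.indicator_of_mem hxA, hf0]
        have hxA' : w x < θ x ^ α := hxA
        nlinarith [hϱx.1]
      · rw [Set.indicator_of_notMem hxA]; simp
    have hintneg : Integrable (fun x => -(A.indicator (f 0) x)) μ :=
      (hindint 0 (by rw [abs_zero]; exact hθstar.le) A hA).neg
    have hzero' : ∫ x, -(A.indicator (f 0) x) ∂μ = 0 := by
      rw [integral_neg, hzero A hA, neg_zero]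
    have heq := (integral_eq_zero_iff_of_nonneg_ae hnn hintneg).mp hzero'
    filter_upwards [heq, hϱbd] with x hx hϱx
    by_contra hcon
    push_neg at hcon
    have hxA : x ∈ A := hcon
    simp only [Pi.zero_apply] at hx
    rw [Set.indicator_of_mem hxA, hf0] at hx
    have hxA' : w x < θ x ^ α := hcon
    nlinarith [hϱx.1]
  filter_upwards [hup, hdown] with x h1 h2
  linarith
end
end
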